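/- Let γ > 1 and define Ω := {(ρ, m₁, m₂, m₃, E, B₁, B₂, B₃) ∈ ℝ⁸ : ρ > 0 and E − (m₁² + m₂² + m₃²)/(2ρ) − ½(B₁² + B₂² + B₃²) > 0}. Then Ω is an open convex subset of ℝ⁸, and the mathematical entropy function S : Ω → ℝ given by S(q) = −ρ(ln p − γ ln ρ)/(γ−1), where p = (γ−1)(E − ‖m‖²/(2ρ) − ½‖B‖²), is strictly convex on Ω. -/

import Mathlib

section MHDAux

private lemma log_sub_log_ge' {u v : ℝ} (hu : 0 < u) (hv : 0 < v) :
    1 - v / u ≤ Real.log u - Real.log v := by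
  have h := Real.one_sub_inv_le_log_of_pos (div_pos hu hv)
  rw [Real.log_div hu.ne' hv.ne', inv_div] at h
  linarith

private lemma log_sub_log_gt' {u v : ℝ} (hu : 0 < u) (hv : 0 < v) (hne : u ≠ v) :
    1 - v / u < Real.log u - Real.log v := by
  have h := Real.log_lt_sub_one_of_pos (div_pos hv hu) (by
    intro h; exact hne (by field_simp at h; linarith))
  rw [Real.log_div hv.ne' hu.ne'] at h
  linarith

private lemma persp_le' {a b ρ1 ρ2 m1 m2 : ℝ} (ha : 0 < a) (hb : 0 < b)
    (h1 : 0 < ρ1) (h2 : 0 < ρ2) :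
    (a * m1 + b * m2) ^ 2 / (2 * (a * ρ1 + b * ρ2))
      ≤ a * (m1 ^ 2 / (2 * ρ1)) + b * (m2 ^ 2 / (2 * ρ2)) := by
  have hz : 0 < a * ρ1 + b * ρ2 := by positivity
  have key : a * (m1 ^ 2 / (2 * ρ1)) + b * (m2 ^ 2 / (2 * ρ2))
      - (a * m1 + b * m2) ^ 2 / (2 * (a * ρ1 + b * ρ2))
      = (a * b * (m1 * ρ2 - m2 * ρ1) ^ 2) / (2 * ρ1 * ρ2 * (a * ρ1 + b * ρ2)) := by
    field_simp
    ring
  have h0 : 0 ≤ (a * b * (m1 * ρ2 - m2 * ρ1) ^ 2) / (2 * ρ1 * ρ2 * (a * ρ1 + b * ρ2)) := by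
    positivity
  linarith

private lemma persp_eq' {a b ρ1 ρ2 m1 m2 : ℝ} (ha : 0 < a) (hb : 0 < b)
    (h1 : 0 < ρ1) (h2 : 0 < ρ2)
    (heq : (a * m1 + b * m2) ^ 2 / (2 * (a * ρ1 + b * ρ2))
      = a * (m1 ^ 2 / (2 * ρ1)) + b * (m2 ^ 2 / (2 * ρ2))) :
    m1 * ρ2 = m2 * ρ1 := by
  have hz : 0 < a * ρ1 + b * ρ2 := by positivity
  have key : a * (m1 ^ 2 / (2 * ρ1)) + b * (m2 ^ 2 / (2 * ρ2))
      - (a * m1 + b * m2) ^ 2 / (2 * (a * ρ1 + b * ρ2))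
      = (a * b * (m1 * ρ2 - m2 * ρ1) ^ 2) / (2 * ρ1 * ρ2 * (a * ρ1 + b * ρ2)) := by
    field_simp
    ring
  have hd : (0:ℝ) < 2 * ρ1 * ρ2 * (a * ρ1 + b * ρ2) := by positivity
  have hnum : (a * b * (m1 * ρ2 - m2 * ρ1) ^ 2) / (2 * ρ1 * ρ2 * (a * ρ1 + b * ρ2)) = 0 := by
    rw [← key, heq]; ring
  rw [div_eq_zero_iff] at hnum
  have h0 : a * b * (m1 * ρ2 - m2 * ρ1) ^ 2 = 0 := by
    rcases hnum with h | h
    · exact h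
    · exact absurd h hd.ne'
  have habp : (0:ℝ) < a * b := mul_pos ha hb
  have hsq : (m1 * ρ2 - m2 * ρ1) ^ 2 = 0 := by
    rcases mul_eq_zero.mp h0 with h | h
    · exact absurd h habp.ne'
    · exact h
  have := sq_eq_zero_iff.mp hsq
  linarith

private lemma bsq_le' {a b m1 m2 : ℝ} (ha : 0 < a) (hb : 0 < b) (hab : a + b = 1) :
    (a * m1 + b * m2) ^ 2 ≤ a * m1 ^ 2 + b * m2 ^ 2 := by
  nlinarith [mul_nonneg (mul_pos ha hb).le (sq_nonneg (m1 - m2))]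

private lemma bsq_eq' {a b m1 m2 : ℝ} (ha : 0 < a) (hb : 0 < b) (hab : a + b = 1)
    (heq : (a * m1 + b * m2) ^ 2 = a * m1 ^ 2 + b * m2 ^ 2) : m1 = m2 := by
  have h0 : a * b * (m1 - m2) ^ 2 = 0 := by
    linear_combination (a * m1 ^ 2 + b * m2 ^ 2) * hab - heq
  have hab' : (0:ℝ) < a * b := mul_pos ha hb
  have : (m1 - m2) ^ 2 = 0 := by
    rcases mul_eq_zero.mp h0 with h | h
    · exact absurd h hab'.ne'
    · exact h
  have := sq_eq_zero_iff.mp this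
  linarith

private lemma main2' {γ a b ρ1 ρ2 e1 e2 ez : ℝ} (hγ : 1 < γ) (ha : 0 < a) (hb : 0 < b)
    (hab : a + b = 1) (h1 : 0 < ρ1) (h2 : 0 < ρ2) (he1 : 0 < e1) (he2 : 0 < e2)
    (hez : a * e1 + b * e2 ≤ ez)
    (hne : ρ1 ≠ ρ2 ∨ e1 ≠ e2 ∨ a * e1 + b * e2 < ez) :
    γ * ((a * ρ1 + b * ρ2) * Real.log (a * ρ1 + b * ρ2))
        - (a * ρ1 + b * ρ2) * Real.log ez
      < a * (γ * (ρ1 * Real.log ρ1) - ρ1 * Real.log e1)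
        + b * (γ * (ρ2 * Real.log ρ2) - ρ2 * Real.log e2) := by
  have hρz : 0 < a * ρ1 + b * ρ2 := by positivity
  have hebar : 0 < a * e1 + b * e2 := by positivity
  have hez0 : 0 < ez := lt_of_lt_of_le hebar hez
  have h1' : 1 - (a * ρ1 + b * ρ2) / ρ1 ≤ Real.log ρ1 - Real.log (a * ρ1 + b * ρ2) :=
    log_sub_log_ge' h1 hρz
  have h2' : 1 - (a * ρ1 + b * ρ2) / ρ2 ≤ Real.log ρ2 - Real.log (a * ρ1 + b * ρ2) :=
    log_sub_log_ge' h2 hρz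
  have h3 : 1 - (e1 * (a * ρ1 + b * ρ2)) / (ρ1 * (a * e1 + b * e2))
      ≤ (Real.log ρ1 + Real.log (a * e1 + b * e2))
        - (Real.log e1 + Real.log (a * ρ1 + b * ρ2)) := by
    have h := log_sub_log_ge' (mul_pos h1 hebar) (mul_pos he1 hρz)
    rw [Real.log_mul h1.ne' hebar.ne', Real.log_mul he1.ne' hρz.ne'] at h
    exact h
  have h4 : 1 - (e2 * (a * ρ1 + b * ρ2)) / (ρ2 * (a * e1 + b * e2))
      ≤ (Real.log ρ2 + Real.log (a * e1 + b * e2))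
        - (Real.log e2 + Real.log (a * ρ1 + b * ρ2)) := by
    have h := log_sub_log_ge' (mul_pos h2 hebar) (mul_pos he2 hρz)
    rw [Real.log_mul h2.ne' hebar.ne', Real.log_mul he2.ne' hρz.ne'] at h
    exact h
  have h5 : Real.log (a * e1 + b * e2) ≤ Real.log ez := Real.log_le_log hebar hez
  have E1 : a * ρ1 * (1 - (a * ρ1 + b * ρ2) / ρ1)
      + b * ρ2 * (1 - (a * ρ1 + b * ρ2) / ρ2) = 0 := by
    field_simp
    linear_combination (-(a * ρ1) - b * ρ2) * hab
  have E2 : a * ρ1 * (1 - (e1 * (a * ρ1 + b * ρ2)) / (ρ1 * (a * e1 + b * e2)))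
      + b * ρ2 * (1 - (e2 * (a * ρ1 + b * ρ2)) / (ρ2 * (a * e1 + b * e2))) = 0 := by
    field_simp
    ring
  have A1 : a * ρ1 * (1 - (a * ρ1 + b * ρ2) / ρ1)
      ≤ a * ρ1 * (Real.log ρ1 - Real.log (a * ρ1 + b * ρ2)) :=
    mul_le_mul_of_nonneg_left h1' (by positivity)
  have A2 : a * ρ1 * (1 - (a * ρ1 + b * ρ2) / ρ1)
      + b * ρ2 * (1 - (a * ρ1 + b * ρ2) / ρ2)
      ≤ a * ρ1 * (Real.log ρ1 - Real.log (a * ρ1 + b * ρ2))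
      + b * ρ2 * (Real.log ρ2 - Real.log (a * ρ1 + b * ρ2)) :=
    add_le_add A1 (mul_le_mul_of_nonneg_left h2' (by positivity))
  have SA : 0 ≤ a * ρ1 * (Real.log ρ1 - Real.log (a * ρ1 + b * ρ2))
      + b * ρ2 * (Real.log ρ2 - Real.log (a * ρ1 + b * ρ2)) := by linarith
  have SB : 0 ≤ a * ρ1 * ((Real.log ρ1 + Real.log (a * e1 + b * e2))
        - (Real.log e1 + Real.log (a * ρ1 + b * ρ2)))
      + b * ρ2 * ((Real.log ρ2 + Real.log (a * e1 + b * e2))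
        - (Real.log e2 + Real.log (a * ρ1 + b * ρ2))) := by
    have B1 := mul_le_mul_of_nonneg_left h3 (show (0:ℝ) ≤ a * ρ1 by positivity)
    have B2 := mul_le_mul_of_nonneg_left h4 (show (0:ℝ) ≤ b * ρ2 by positivity)
    linarith
  have SM : 0 ≤ (a * ρ1 + b * ρ2) * (Real.log ez - Real.log (a * e1 + b * e2)) := by
    exact mul_nonneg hρz.le (sub_nonneg.mpr h5)
  have hstrict : 0 < (γ - 1) * (a * ρ1 * (Real.log ρ1 - Real.log (a * ρ1 + b * ρ2))
        + b * ρ2 * (Real.log ρ2 - Real.log (a * ρ1 + b * ρ2)))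
      + (a * ρ1 * ((Real.log ρ1 + Real.log (a * e1 + b * e2))
        - (Real.log e1 + Real.log (a * ρ1 + b * ρ2)))
      + b * ρ2 * ((Real.log ρ2 + Real.log (a * e1 + b * e2))
        - (Real.log e2 + Real.log (a * ρ1 + b * ρ2))))
      + (a * ρ1 + b * ρ2) * (Real.log ez - Real.log (a * e1 + b * e2)) := by
    have hγ1 : 0 < γ - 1 := by linarith
    by_cases hρ : ρ1 = ρ2
    · subst hρ
      rcases hne with h | h | h
      · exact absurd rfl h
      · have hne2 : ρ1 * (a * e1 + b * e2) ≠ e1 * (a * ρ1 + b * ρ1) := by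
          intro hcontra
          apply h
          have h6 : (ρ1 * b) * e2 = (ρ1 * b) * e1 := by
            linear_combination hcontra
          exact (mul_left_cancel₀ (mul_pos h1 hb).ne' h6).symm
        have h3s : 1 - (e1 * (a * ρ1 + b * ρ1)) / (ρ1 * (a * e1 + b * e2))
            < (Real.log ρ1 + Real.log (a * e1 + b * e2))
              - (Real.log e1 + Real.log (a * ρ1 + b * ρ1)) := by
          have h := log_sub_log_gt' (mul_pos h1 hebar) (mul_pos he1 hρz) hne2
          rw [Real.log_mul h1.ne' hebar.ne', Real.log_mul he1.ne' hρz.ne'] at h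
          exact h
        have B1 := mul_lt_mul_of_pos_left h3s (show (0:ℝ) < a * ρ1 by positivity)
        have B2 := mul_le_mul_of_nonneg_left h4 (show (0:ℝ) ≤ b * ρ1 by positivity)
        linarith [mul_nonneg hγ1.le SA]
      · have h5s : Real.log (a * e1 + b * e2) < Real.log ez := Real.log_lt_log hebar h
        have hM : 0 < (a * ρ1 + b * ρ1) * (Real.log ez - Real.log (a * e1 + b * e2)) :=
          mul_pos hρz (sub_pos.mpr h5s)
        linarith [mul_nonneg hγ1.le SA]
    · have hne1 : ρ1 ≠ a * ρ1 + b * ρ2 := by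
        intro hcontra
        apply hρ
        have h' : (1 - a) * ρ1 = b * ρ2 := by linear_combination hcontra
        rw [show (1:ℝ) - a = b by linarith] at h'
        exact mul_left_cancel₀ hb.ne' h'
      have h1s : 1 - (a * ρ1 + b * ρ2) / ρ1
          < Real.log ρ1 - Real.log (a * ρ1 + b * ρ2) :=
        log_sub_log_gt' h1 hρz hne1
      have A1s := mul_lt_mul_of_pos_left h1s (show (0:ℝ) < a * ρ1 by positivity)
      have A2s := mul_le_mul_of_nonneg_left h2' (show (0:ℝ) ≤ b * ρ2 by positivity)
      have SAs : 0 < a * ρ1 * (Real.log ρ1 - Real.log (a * ρ1 + b * ρ2))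
          + b * ρ2 * (Real.log ρ2 - Real.log (a * ρ1 + b * ρ2)) := by linarith
      linarith [mul_pos hγ1 SAs]
  linarith [hstrict]

private lemma e_comb' {a b : ℝ} {x y : Fin 8 → ℝ} (ha : 0 < a) (hb : 0 < b)
    (hab : a + b = 1) (hx0 : 0 < x 0) (hy0 : 0 < y 0) :
    a * (x 4 - (x 1 ^ 2 + x 2 ^ 2 + x 3 ^ 2) / (2 * x 0) - (x 5 ^ 2 + x 6 ^ 2 + x 7 ^ 2) / 2)
      + b * (y 4 - (y 1 ^ 2 + y 2 ^ 2 + y 3 ^ 2) / (2 * y 0) - (y 5 ^ 2 + y 6 ^ 2 + y 7 ^ 2) / 2)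
      ≤ (a * x 4 + b * y 4)
        - ((a * x 1 + b * y 1) ^ 2 + (a * x 2 + b * y 2) ^ 2 + (a * x 3 + b * y 3) ^ 2)
            / (2 * (a * x 0 + b * y 0))
        - ((a * x 5 + b * y 5) ^ 2 + (a * x 6 + b * y 6) ^ 2 + (a * x 7 + b * y 7) ^ 2) / 2 := by
  have p1 := persp_le' (m1 := x 1) (m2 := y 1) ha hb hx0 hy0
  have p2 := persp_le' (m1 := x 2) (m2 := y 2) ha hb hx0 hy0
  have p3 := persp_le' (m1 := x 3) (m2 := y 3) ha hb hx0 hy0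
  have q1 := bsq_le' (m1 := x 5) (m2 := y 5) ha hb hab
  have q2 := bsq_le' (m1 := x 6) (m2 := y 6) ha hb hab
  have q3 := bsq_le' (m1 := x 7) (m2 := y 7) ha hb hab
  have s1 : ((a * x 1 + b * y 1) ^ 2 + (a * x 2 + b * y 2) ^ 2 + (a * x 3 + b * y 3) ^ 2)
      / (2 * (a * x 0 + b * y 0))
      = (a * x 1 + b * y 1) ^ 2 / (2 * (a * x 0 + b * y 0))
        + (a * x 2 + b * y 2) ^ 2 / (2 * (a * x 0 + b * y 0))
        + (a * x 3 + b * y 3) ^ 2 / (2 * (a * x 0 + b * y 0)) := by ring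
  have s2 : a * (x 4 - (x 1 ^ 2 + x 2 ^ 2 + x 3 ^ 2) / (2 * x 0) - (x 5 ^ 2 + x 6 ^ 2 + x 7 ^ 2) / 2)
      = a * x 4 - a * (x 1 ^ 2 / (2 * x 0)) - a * (x 2 ^ 2 / (2 * x 0)) - a * (x 3 ^ 2 / (2 * x 0))
        - a * x 5 ^ 2 / 2 - a * x 6 ^ 2 / 2 - a * x 7 ^ 2 / 2 := by ring
  have s3 : b * (y 4 - (y 1 ^ 2 + y 2 ^ 2 + y 3 ^ 2) / (2 * y 0) - (y 5 ^ 2 + y 6 ^ 2 + y 7 ^ 2) / 2)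
      = b * y 4 - b * (y 1 ^ 2 / (2 * y 0)) - b * (y 2 ^ 2 / (2 * y 0)) - b * (y 3 ^ 2 / (2 * y 0))
        - b * y 5 ^ 2 / 2 - b * y 6 ^ 2 / 2 - b * y 7 ^ 2 / 2 := by ring
  rw [s2, s3, s1]
  linarith

end MHDAux

set_option maxHeartbeats 2000000 in
/-- the set of physically admissible ideal-MHD states is open and convex,
and the mathematical entropy function is strictly convex on it. -/
theorem entropy_strictly_convex (γ : ℝ) (hγ : 1 < γ) :
    let Ω : Set (Fin 8 → ℝ) :=
      {q | 0 < q 0 ∧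
        0 < q 4 - (q 1 ^ 2 + q 2 ^ 2 + q 3 ^ 2) / (2 * q 0)
              - (q 5 ^ 2 + q 6 ^ 2 + q 7 ^ 2) / 2}
    let S : (Fin 8 → ℝ) → ℝ := fun q =>
      -(q 0 * (Real.log ((γ - 1) * (q 4 - (q 1 ^ 2 + q 2 ^ 2 + q 3 ^ 2) / (2 * q 0)
              - (q 5 ^ 2 + q 6 ^ 2 + q 7 ^ 2) / 2)) - γ * Real.log (q 0))) / (γ - 1)
    IsOpen Ω ∧ Convex ℝ Ω ∧ StrictConvexOn ℝ Ω S := by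
  intro Ω S
  have hγ1 : (0:ℝ) < γ - 1 := by linarith
  -- the rewriting lemma for S
  have S_eq : ∀ q : Fin 8 → ℝ, q ∈ Ω → S q
      = (γ * (q 0 * Real.log (q 0))
          - q 0 * Real.log (q 4 - (q 1 ^ 2 + q 2 ^ 2 + q 3 ^ 2) / (2 * q 0)
              - (q 5 ^ 2 + q 6 ^ 2 + q 7 ^ 2) / 2)
          - Real.log (γ - 1) * q 0) / (γ - 1) := by
    intro q hq
    obtain ⟨hq0, hqe⟩ := hq
    show -(q 0 * (Real.log ((γ - 1) * _) - γ * Real.log (q 0))) / (γ - 1) = _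
    rw [Real.log_mul hγ1.ne' hqe.ne']
    ring
  -- convexity of Ω
  have hconv : Convex ℝ Ω := by
    intro x hx y hy a b ha hb hab
    rcases eq_or_lt_of_le ha with rfl | ha'
    · simp only [zero_add] at hab
      subst hab
      simpa using hy
    rcases eq_or_lt_of_le hb with rfl | hb'
    · simp only [add_zero] at hab
      subst hab
      simpa using hx
    obtain ⟨hx0, hxe⟩ := hx
    obtain ⟨hy0, hye⟩ := hy
    have hz : ∀ i : Fin 8, (a • x + b • y) i = a * x i + b * y i := by
      intro i; simp
    refine ⟨?_, ?_⟩
    · rw [hz 0]; positivity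
    · simp only [hz]
      have hec := e_comb' ha' hb' hab hx0 hy0
      have : 0 < a * (x 4 - (x 1 ^ 2 + x 2 ^ 2 + x 3 ^ 2) / (2 * x 0)
            - (x 5 ^ 2 + x 6 ^ 2 + x 7 ^ 2) / 2)
          + b * (y 4 - (y 1 ^ 2 + y 2 ^ 2 + y 3 ^ 2) / (2 * y 0)
            - (y 5 ^ 2 + y 6 ^ 2 + y 7 ^ 2) / 2) := by positivity
      linarith
  refine ⟨?_, hconv, ?_⟩
  · -- openness
    have hΩ : Ω = {q : Fin 8 → ℝ | 0 < q 0} ∩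
        {q : Fin 8 → ℝ | 0 < 2 * q 0 * q 4 - (q 1 ^ 2 + q 2 ^ 2 + q 3 ^ 2)
          - q 0 * (q 5 ^ 2 + q 6 ^ 2 + q 7 ^ 2)} := by
      ext q
      simp only [Set.mem_setOf_eq, Set.mem_inter_iff]
      constructor
      · rintro ⟨h0, h1⟩
        refine ⟨h0, ?_⟩
        have h2 : 0 < (2 * q 0) * (q 4 - (q 1 ^ 2 + q 2 ^ 2 + q 3 ^ 2) / (2 * q 0)
            - (q 5 ^ 2 + q 6 ^ 2 + q 7 ^ 2) / 2) := by
          have : (0:ℝ) < 2 * q 0 := by positivity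
          exact mul_pos this h1
        have h3 : (2 * q 0) * (q 4 - (q 1 ^ 2 + q 2 ^ 2 + q 3 ^ 2) / (2 * q 0)
            - (q 5 ^ 2 + q 6 ^ 2 + q 7 ^ 2) / 2)
            = 2 * q 0 * q 4 - (q 1 ^ 2 + q 2 ^ 2 + q 3 ^ 2)
              - q 0 * (q 5 ^ 2 + q 6 ^ 2 + q 7 ^ 2) := by
          field_simp
        linarith
      · rintro ⟨h0, h1⟩
        refine ⟨h0, ?_⟩
        have h3 : q 4 - (q 1 ^ 2 + q 2 ^ 2 + q 3 ^ 2) / (2 * q 0)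
            - (q 5 ^ 2 + q 6 ^ 2 + q 7 ^ 2) / 2
            = (2 * q 0 * q 4 - (q 1 ^ 2 + q 2 ^ 2 + q 3 ^ 2)
              - q 0 * (q 5 ^ 2 + q 6 ^ 2 + q 7 ^ 2)) / (2 * q 0) := by
          field_simp
        rw [h3]
        positivity
    rw [hΩ]
    refine IsOpen.inter (isOpen_lt continuous_const (continuous_apply 0))
      (isOpen_lt continuous_const ?_)
    fun_prop
  · -- strict convexity
    refine ⟨hconv, ?_⟩
    intro x hx y hy hneq a b ha hb hab
    obtain ⟨hx0, hxe⟩ := hx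
    obtain ⟨hy0, hye⟩ := hy
    have hz : ∀ i : Fin 8, (a • x + b • y) i = a * x i + b * y i := by
      intro i; simp
    have hz0 : 0 < a * x 0 + b * y 0 := by positivity
    have hec := e_comb' ha hb hab hx0 hy0
    have hebar : 0 < a * (x 4 - (x 1 ^ 2 + x 2 ^ 2 + x 3 ^ 2) / (2 * x 0)
          - (x 5 ^ 2 + x 6 ^ 2 + x 7 ^ 2) / 2)
        + b * (y 4 - (y 1 ^ 2 + y 2 ^ 2 + y 3 ^ 2) / (2 * y 0)
          - (y 5 ^ 2 + y 6 ^ 2 + y 7 ^ 2) / 2) := by positivity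
    have hze : 0 < (a * x 4 + b * y 4)
        - ((a * x 1 + b * y 1) ^ 2 + (a * x 2 + b * y 2) ^ 2 + (a * x 3 + b * y 3) ^ 2)
            / (2 * (a * x 0 + b * y 0))
        - ((a * x 5 + b * y 5) ^ 2 + (a * x 6 + b * y 6) ^ 2 + (a * x 7 + b * y 7) ^ 2) / 2 := by
      linarith
    have hzmem : a • x + b • y ∈ Ω := by
      refine ⟨?_, ?_⟩
      · rw [hz 0]; exact hz0
      · simp only [hz]; exact hze
    -- the strictness disjunction
    have hne : x 0 ≠ y 0
        ∨ (x 4 - (x 1 ^ 2 + x 2 ^ 2 + x 3 ^ 2) / (2 * x 0)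
            - (x 5 ^ 2 + x 6 ^ 2 + x 7 ^ 2) / 2)
          ≠ (y 4 - (y 1 ^ 2 + y 2 ^ 2 + y 3 ^ 2) / (2 * y 0)
            - (y 5 ^ 2 + y 6 ^ 2 + y 7 ^ 2) / 2)
        ∨ a * (x 4 - (x 1 ^ 2 + x 2 ^ 2 + x 3 ^ 2) / (2 * x 0)
            - (x 5 ^ 2 + x 6 ^ 2 + x 7 ^ 2) / 2)
          + b * (y 4 - (y 1 ^ 2 + y 2 ^ 2 + y 3 ^ 2) / (2 * y 0)
            - (y 5 ^ 2 + y 6 ^ 2 + y 7 ^ 2) / 2)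
          < (a * x 4 + b * y 4)
            - ((a * x 1 + b * y 1) ^ 2 + (a * x 2 + b * y 2) ^ 2 + (a * x 3 + b * y 3) ^ 2)
                / (2 * (a * x 0 + b * y 0))
            - ((a * x 5 + b * y 5) ^ 2 + (a * x 6 + b * y 6) ^ 2
                + (a * x 7 + b * y 7) ^ 2) / 2 := by
      by_cases hρ : x 0 = y 0
      · by_cases hlt : a * (x 4 - (x 1 ^ 2 + x 2 ^ 2 + x 3 ^ 2) / (2 * x 0)
              - (x 5 ^ 2 + x 6 ^ 2 + x 7 ^ 2) / 2)
            + b * (y 4 - (y 1 ^ 2 + y 2 ^ 2 + y 3 ^ 2) / (2 * y 0)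
              - (y 5 ^ 2 + y 6 ^ 2 + y 7 ^ 2) / 2)
            < (a * x 4 + b * y 4)
              - ((a * x 1 + b * y 1) ^ 2 + (a * x 2 + b * y 2) ^ 2 + (a * x 3 + b * y 3) ^ 2)
                  / (2 * (a * x 0 + b * y 0))
              - ((a * x 5 + b * y 5) ^ 2 + (a * x 6 + b * y 6) ^ 2
                  + (a * x 7 + b * y 7) ^ 2) / 2
        · exact Or.inr (Or.inr hlt)
        · -- equality case: extract equality of components
          have heq : a * (x 4 - (x 1 ^ 2 + x 2 ^ 2 + x 3 ^ 2) / (2 * x 0)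
                - (x 5 ^ 2 + x 6 ^ 2 + x 7 ^ 2) / 2)
              + b * (y 4 - (y 1 ^ 2 + y 2 ^ 2 + y 3 ^ 2) / (2 * y 0)
                - (y 5 ^ 2 + y 6 ^ 2 + y 7 ^ 2) / 2)
              = (a * x 4 + b * y 4)
                - ((a * x 1 + b * y 1) ^ 2 + (a * x 2 + b * y 2) ^ 2
                    + (a * x 3 + b * y 3) ^ 2) / (2 * (a * x 0 + b * y 0))
                - ((a * x 5 + b * y 5) ^ 2 + (a * x 6 + b * y 6) ^ 2
                    + (a * x 7 + b * y 7) ^ 2) / 2 :=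
            le_antisymm hec (not_lt.mp hlt)
          have p1 := persp_le' (m1 := x 1) (m2 := y 1) ha hb hx0 hy0
          have p2 := persp_le' (m1 := x 2) (m2 := y 2) ha hb hx0 hy0
          have p3 := persp_le' (m1 := x 3) (m2 := y 3) ha hb hx0 hy0
          have q1 := bsq_le' (m1 := x 5) (m2 := y 5) ha hb hab
          have q2 := bsq_le' (m1 := x 6) (m2 := y 6) ha hb hab
          have q3 := bsq_le' (m1 := x 7) (m2 := y 7) ha hb hab
          have s1 : ((a * x 1 + b * y 1) ^ 2 + (a * x 2 + b * y 2) ^ 2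
              + (a * x 3 + b * y 3) ^ 2) / (2 * (a * x 0 + b * y 0))
              = (a * x 1 + b * y 1) ^ 2 / (2 * (a * x 0 + b * y 0))
                + (a * x 2 + b * y 2) ^ 2 / (2 * (a * x 0 + b * y 0))
                + (a * x 3 + b * y 3) ^ 2 / (2 * (a * x 0 + b * y 0)) := by ring
          have s2 : (x 1 ^ 2 + x 2 ^ 2 + x 3 ^ 2) / (2 * x 0)
              = x 1 ^ 2 / (2 * x 0) + x 2 ^ 2 / (2 * x 0) + x 3 ^ 2 / (2 * x 0) := by ring
          have s3 : (y 1 ^ 2 + y 2 ^ 2 + y 3 ^ 2) / (2 * y 0)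
              = y 1 ^ 2 / (2 * y 0) + y 2 ^ 2 / (2 * y 0) + y 3 ^ 2 / (2 * y 0) := by ring
          have hgap : (a * (x 1 ^ 2 / (2 * x 0)) + b * (y 1 ^ 2 / (2 * y 0))
                - (a * x 1 + b * y 1) ^ 2 / (2 * (a * x 0 + b * y 0)))
              + (a * (x 2 ^ 2 / (2 * x 0)) + b * (y 2 ^ 2 / (2 * y 0))
                - (a * x 2 + b * y 2) ^ 2 / (2 * (a * x 0 + b * y 0)))
              + (a * (x 3 ^ 2 / (2 * x 0)) + b * (y 3 ^ 2 / (2 * y 0))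
                - (a * x 3 + b * y 3) ^ 2 / (2 * (a * x 0 + b * y 0)))
              + (a * x 5 ^ 2 + b * y 5 ^ 2 - (a * x 5 + b * y 5) ^ 2) / 2
              + (a * x 6 ^ 2 + b * y 6 ^ 2 - (a * x 6 + b * y 6) ^ 2) / 2
              + (a * x 7 ^ 2 + b * y 7 ^ 2 - (a * x 7 + b * y 7) ^ 2) / 2 = 0 := by
            linear_combination -heq
          have g1 : (a * x 1 + b * y 1) ^ 2 / (2 * (a * x 0 + b * y 0))
              = a * (x 1 ^ 2 / (2 * x 0)) + b * (y 1 ^ 2 / (2 * y 0)) :=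
            le_antisymm p1 (by linarith)
          have g2 : (a * x 2 + b * y 2) ^ 2 / (2 * (a * x 0 + b * y 0))
              = a * (x 2 ^ 2 / (2 * x 0)) + b * (y 2 ^ 2 / (2 * y 0)) :=
            le_antisymm p2 (by linarith)
          have g3 : (a * x 3 + b * y 3) ^ 2 / (2 * (a * x 0 + b * y 0))
              = a * (x 3 ^ 2 / (2 * x 0)) + b * (y 3 ^ 2 / (2 * y 0)) :=
            le_antisymm p3 (by linarith)
          have g5 : (a * x 5 + b * y 5) ^ 2 = a * x 5 ^ 2 + b * y 5 ^ 2 :=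
            le_antisymm q1 (by linarith)
          have g6 : (a * x 6 + b * y 6) ^ 2 = a * x 6 ^ 2 + b * y 6 ^ 2 :=
            le_antisymm q2 (by linarith)
          have g7 : (a * x 7 + b * y 7) ^ 2 = a * x 7 ^ 2 + b * y 7 ^ 2 :=
            le_antisymm q3 (by linarith)
          have c1 : x 1 = y 1 := by
            have h := persp_eq' ha hb hx0 hy0 g1
            rw [← hρ] at h
            exact mul_right_cancel₀ hx0.ne' h
          have c2 : x 2 = y 2 := by
            have h := persp_eq' ha hb hx0 hy0 g2
            rw [← hρ] at h
            exact mul_right_cancel₀ hx0.ne' h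
          have c3 : x 3 = y 3 := by
            have h := persp_eq' ha hb hx0 hy0 g3
            rw [← hρ] at h
            exact mul_right_cancel₀ hx0.ne' h
          have c5 : x 5 = y 5 := bsq_eq' ha hb hab g5
          have c6 : x 6 = y 6 := bsq_eq' ha hb hab g6
          have c7 : x 7 = y 7 := bsq_eq' ha hb hab g7
          by_cases h4 : x 4 = y 4
          · exact absurd (funext fun i => by
              fin_cases i <;> first | exact hρ | exact c1 | exact c2 | exact c3 | exact h4 | exact c5 | exact c6 | exact c7) hneq
          · refine Or.inr (Or.inl ?_)
            intro hcontra
            apply h4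
            have hd : (x 4 - (x 1 ^ 2 + x 2 ^ 2 + x 3 ^ 2) / (2 * x 0)
                - (x 5 ^ 2 + x 6 ^ 2 + x 7 ^ 2) / 2)
                - (y 4 - (y 1 ^ 2 + y 2 ^ 2 + y 3 ^ 2) / (2 * y 0)
                - (y 5 ^ 2 + y 6 ^ 2 + y 7 ^ 2) / 2) = x 4 - y 4 := by
              rw [hρ, c1, c2, c3, c5, c6, c7]; ring
            rw [hcontra, sub_self] at hd
            linarith
      · exact Or.inl hρ
    have hmain := main2' (ρ1 := x 0) (ρ2 := y 0) hγ ha hb hab hx0 hy0 hxe hye hec hne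
    -- rewrite S at all three points
    rw [S_eq x ⟨hx0, hxe⟩, S_eq y ⟨hy0, hye⟩, S_eq (a • x + b • y) hzmem]
    simp only [hz, smul_eq_mul]
    rw [← mul_div_assoc, ← mul_div_assoc, ← add_div, div_lt_div_iff_of_pos_right hγ1]
    linarith [hmain]
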